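/- The function H(R,Y) = 2s²·R^{ν+1}/(ν+1) + (β/(ν+2)²)R^{2(ν+2)} + γ·Y²·R^{2(ν+1)} − 2E·R^{ν+2}/(ν+2) is a first integral of the planar ODE system dR/dz = Y, dY/dz = (γR^{ν+2})^{-1}[E·R − s² − (β/(ν+2))R^{ν+3} − γ(ν+1)R^{ν+1}Y²]: along any solution (R(z), Y(z)) with R(z) > 0, the derivative d/dz H(R(z), Y(z)) = 0. -/

import Mathlib

/-- H(R,Y) = 2s²R^{ν+1}/(ν+1) + (β/(ν+2)²)R^{2(ν+2)}
+ γY²R^{2(ν+1)} − 2E·R^{ν+2}/(ν+2) is a first integral of the system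
dR/dz = Y, dY/dz = (γR^{ν+2})⁻¹[ER − s² − (β/(ν+2))R^{ν+3} − γ(ν+1)R^{ν+1}Y²]:
along any solution with R > 0 the derivative of z ↦ H(R z, Y z) vanishes. -/
theorem stmt4 (β γ s E : ℝ) (ν : ℕ) (hβ : 0 < β) (hγ : γ ≠ 0)
    (R Y : ℝ → ℝ) (hpos : ∀ z, 0 < R z)
    (hR : ∀ z, HasDerivAt R (Y z) z)
    (hY : ∀ z, HasDerivAt Y
      ((γ * R z ^ (ν + 2))⁻¹ *
        (E * R z - (s ^ 2 + β / ((ν : ℝ) + 2) * R z ^ (ν + 3)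
          + γ * ((ν : ℝ) + 1) * R z ^ (ν + 1) * Y z ^ 2))) z) :
    ∀ z, HasDerivAt (fun z =>
      2 * s ^ 2 * R z ^ (ν + 1) / ((ν : ℝ) + 1)
        + β / ((ν : ℝ) + 2) ^ 2 * R z ^ (2 * (ν + 2))
        + γ * Y z ^ 2 * R z ^ (2 * (ν + 1))
        - 2 * E * R z ^ (ν + 2) / ((ν : ℝ) + 2)) 0 z := by
  intro z
  have hRz : R z ≠ 0 := (hpos z).ne'
  have hR' := hR z
  have hY' := hY z
  have hν1 : ((ν : ℝ) + 1) ≠ 0 := by positivity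
  have hν2 : ((ν : ℝ) + 2) ≠ 0 := by positivity
  have h := (((((hR'.pow (ν+1)).const_mul (2*s^2)).div_const ((ν:ℝ)+1)).add
      ((hR'.pow (2*(ν+2))).const_mul (β/((ν:ℝ)+2)^2))).add
      (((hY'.pow 2).const_mul γ).mul (hR'.pow (2*(ν+1))))).sub
      (((hR'.pow (ν+2)).const_mul (2*E)).div_const ((ν:ℝ)+2))
  convert h using 1
  · rfl
  · rfl
  · rfl
  have e1 : 2*(ν+2)-1 = 2*ν+3 := by omega
  have e2 : 2*(ν+1)-1 = 2*ν+1 := by omega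
  have e3 : ν+1-1 = ν := by omega
  have e4 : ν+2-1 = ν+1 := by omega
  rw [e1, e2, e3, e4]
  simp only [Pi.pow_apply]
  push_cast
  field_simp
  ring
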